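/- arXiv:2004.03942 — 3 statements merged into one kernel-verified Lean document; each statement's English description precedes it below -/
import Mathlib

section
/- The lexicographic priority order on jobs refines Johnson's rule: if job J_j has priority vector χ_j = (1, a_j, j) when a_j ≤ b_j and χ_j = (2, −b_j, j) otherwise, and χ_j <_lex χ_k, then min(a_j, b_k) ≤ min(a_k, b_j). -/
/-- The priority vector of a job: `(1, a_j, j)` if `a_j ≤ b_j`, else `(2, -b_j, j)`. -/
noncomputable def priorityVector (a b : ℕ → ℝ) (j : ℕ) : ℕ × ℝ × ℕ :=
  if a j ≤ b j then (1, a j, j) else (2, -b j, j)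

/-- Lexicographic strict order on priority vectors. -/
def lexLt (x y : ℕ × ℝ × ℕ) : Prop :=
  x.1 < y.1 ∨ (x.1 = y.1 ∧ (x.2.1 < y.2.1 ∨ (x.2.1 = y.2.1 ∧ x.2.2 < y.2.2)))

/-- The lexicographic priority order refines Johnson's rule: if
`χ_j <_lex χ_k` then `min(a_j, b_k) ≤ min(a_k, b_j)`. -/
theorem priority_lex_implies_johnson (a b : ℕ → ℝ)
    (ha : ∀ j, 0 ≤ a j) (hb : ∀ j, 0 ≤ b j) (j k : ℕ)
    (h : lexLt (priorityVector a b j) (priorityVector a b k)) :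
    min (a j) (b k) ≤ min (a k) (b j) := by
  unfold lexLt priorityVector at h
  by_cases hj : a j ≤ b j <;> by_cases hk : a k ≤ b k <;> simp [hj, hk] at h
  · have hak : a j ≤ a k := by rcases h with h | ⟨h, _⟩ <;> linarith
    exact le_trans (min_le_left _ _) (le_min hak hj)
  · rw [not_le] at hk
    exact le_min (le_trans (min_le_right _ _) hk.le) (le_trans (min_le_left _ _) hj)
  · rw [not_le] at hj hk
    have hbk : b k ≤ b j := by rcases h with h | ⟨h, _⟩ <;> linarith
    exact le_min (le_trans (min_le_right _ _) hk.le) (le_trans (min_le_right _ _) hbk)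
end

section
/- Exchange lemma for Johnson's rule: if in a two-machine permutation flow shop schedule jobs J_j and J_k are adjacent with J_j immediately before J_k, and min(a_k, b_j) ≤ min(a_j, b_k), then swapping the two jobs does not increase the makespan. -/
/-- Makespan formula for the two-machine permutation flow shop processing the jobs of
list `l` in order: `max_{1 ≤ k ≤ n} (∑_{i=1}^k a_i + ∑_{i=k}^n b_i)`. -/
noncomputable def flowMakespan {ι : Type*} (a b : ι → ℝ) (l : List ι) : ℝ :=
  (Finset.Icc 1 l.length).fold max 0
    (fun k => ((l.take k).map a).sum + ((l.drop (k - 1)).map b).sum)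

lemma le_flowMakespan {ι : Type*} (a b : ι → ℝ) (l : List ι) {c : ℝ} (k : ℕ)
    (hk : k ∈ Finset.Icc 1 l.length)
    (hc : c ≤ ((l.take k).map a).sum + ((l.drop (k - 1)).map b).sum) :
    c ≤ flowMakespan a b l := by
  rw [flowMakespan, Finset.le_fold_max]
  exact Or.inr ⟨k, hk, hc⟩

/-- Exchange lemma for Johnson's rule: if jobs `x` (i.e. `J_j`) and `y` (i.e. `J_k`)
are adjacent with `x` immediately before `y`, and `min(a_k, b_j) ≤ min(a_j, b_k)`,
then swapping the two jobs does not increase the makespan. -/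
theorem johnson_exchange {ι : Type*} (a b : ι → ℝ)
    (ha : ∀ j, 0 ≤ a j) (hb : ∀ j, 0 ≤ b j)
    (u w : List ι) (x y : ι)
    (h : min (a y) (b x) ≤ min (a x) (b y)) :
    flowMakespan a b (u ++ y :: x :: w) ≤ flowMakespan a b (u ++ x :: y :: w) := by
  rw [flowMakespan, Finset.fold_max_le]
  refine ⟨?_, ?_⟩
  · rw [flowMakespan, Finset.le_fold_max]; exact Or.inl le_rfl
  intro k hk
  simp only [Finset.mem_Icc, List.length_append, List.length_cons] at hk
  have hmem : ∀ k', 1 ≤ k' → k' ≤ u.length + (w.length + 1 + 1) →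
      k' ∈ Finset.Icc 1 (u ++ x :: y :: w).length := by
    intro k' h1 h2
    simp only [Finset.mem_Icc, List.length_append, List.length_cons]
    omega
  by_cases hk1 : k ≤ u.length
  · -- both jobs entirely in the drop part
    refine le_flowMakespan a b _ k (hmem k hk.1 (by omega)) ?_
    have h0 : k - u.length = 0 := by omega
    have h1 : k - 1 - u.length = 0 := by omega
    simp only [List.take_append, List.drop_append,
      h0, h1, List.take_zero, List.drop_zero, List.append_nil, List.map_append,
      List.sum_append, List.map_cons, List.sum_cons]
    ring_nf
    exact le_rfl
  · by_cases hk4 : u.length + 3 ≤ k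
    · -- both jobs entirely in the take part: identical values
      obtain ⟨m, rfl⟩ : ∃ m, k = u.length + 3 + m := ⟨k - u.length - 3, by omega⟩
      refine le_flowMakespan a b _ (u.length + 3 + m)
        (hmem _ (by omega) (by omega)) ?_
      have g0 : u.length + 3 + m - u.length = m + 3 := by omega
      have g1 : u.length + 3 + m - 1 - u.length = m + 2 := by omega
      have g1' : u.length + 2 + m - u.length = m + 2 := by omega
      have g2 : u.length + 3 + m - 1 = u.length + 2 + m := by omega
      simp only [Nat.sub_self, Nat.add_sub_cancel, Nat.add_sub_cancel_left,
        List.take_append, List.drop_append,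
        g0, g1, g1', g2, List.take_of_length_le (by omega : u.length ≤ u.length + 3 + m),
        List.drop_eq_nil_of_le (by omega : u.length ≤ u.length + 2 + m),
        List.take_succ_cons, List.drop_succ_cons, List.nil_append,
        List.map_append, List.sum_append, List.map_cons, List.sum_cons]
      ring_nf
      exact le_rfl
    · -- critical positions k = u.length + 1 or k = u.length + 2
      have h0 : u.length + 1 - u.length = 1 := by omega
      have h1 : u.length + 1 - 1 - u.length = 0 := by omega
      have h2 : u.length + 1 - 1 = u.length := by omega
      have g0 : u.length + 2 - u.length = 2 := by omega
      have g1 : u.length + 2 - 1 - u.length = 1 := by omega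
      have g1' : u.length + 1 - u.length = 1 := by omega
      have g2 : u.length + 2 - 1 = u.length + 1 := by omega
      by_cases hc : a y ≤ b x
      · -- a y ≤ a x and a y ≤ b y ; use witness u.length + 1 on the RHS
        have hmin := h
        rw [min_eq_left hc] at hmin
        have hax : a y ≤ a x := hmin.trans (min_le_left _ _)
        have hby : a y ≤ b y := hmin.trans (min_le_right _ _)
        refine le_flowMakespan a b _ (u.length + 1)
          (hmem _ (by omega) (by omega)) ?_
        by_cases hk2 : k = u.length + 1
        · subst hk2
          simp only [Nat.sub_self, Nat.add_sub_cancel, Nat.add_sub_cancel_left,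
            List.take_append, List.drop_append,
            h0, h1, h2, List.take_of_length_le (le_refl u.length),
            List.take_of_length_le (Nat.le_succ u.length), List.drop_length,
            List.take_succ_cons, List.take_zero, List.drop_zero, List.nil_append,
            List.map_append, List.sum_append, List.map_cons, List.sum_cons,
            List.map_nil, List.sum_nil]
          linarith
        · have hk3 : k = u.length + 2 := by omega
          subst hk3
          simp only [Nat.sub_self, Nat.add_sub_cancel, Nat.add_sub_cancel_left,
            List.take_append, List.drop_append,
            g0, g1, g1', g2, h0, h1, h2, List.take_of_length_le (le_refl u.length),
            List.take_of_length_le (Nat.le_succ u.length),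
            List.take_of_length_le (Nat.le_add_right u.length 2),
            List.drop_length, List.drop_eq_nil_of_le (Nat.le_succ u.length),
            List.take_succ_cons, List.take_zero, List.drop_zero,
            List.drop_succ_cons, List.nil_append,
            List.map_append, List.sum_append, List.map_cons, List.sum_cons,
            List.map_nil, List.sum_nil]
          linarith
      · -- b x ≤ a x and b x ≤ b y ; use witness u.length + 2 on the RHS
        push_neg at hc
        have hbx : b x ≤ a y := le_of_lt hc
        have hmin := h
        rw [min_eq_right hbx] at hmin
        have hax : b x ≤ a x := hmin.trans (min_le_left _ _)
        have hby : b x ≤ b y := hmin.trans (min_le_right _ _)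
        refine le_flowMakespan a b _ (u.length + 2)
          (hmem _ (by omega) (by omega)) ?_
        by_cases hk2 : k = u.length + 1
        · subst hk2
          simp only [Nat.sub_self, Nat.add_sub_cancel, Nat.add_sub_cancel_left,
            List.take_append, List.drop_append,
            g0, g1, g1', g2, h0, h1, h2, List.take_of_length_le (le_refl u.length),
            List.take_of_length_le (Nat.le_succ u.length),
            List.take_of_length_le (Nat.le_add_right u.length 2),
            List.drop_length, List.drop_eq_nil_of_le (Nat.le_succ u.length),
            List.take_succ_cons, List.take_zero, List.drop_zero,
            List.drop_succ_cons, List.nil_append,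
            List.map_append, List.sum_append, List.map_cons, List.sum_cons,
            List.map_nil, List.sum_nil]
          linarith
        · have hk3 : k = u.length + 2 := by omega
          subst hk3
          simp only [Nat.sub_self, Nat.add_sub_cancel, Nat.add_sub_cancel_left,
            List.take_append, List.drop_append,
            g0, g1, g1', g2, List.take_of_length_le (le_refl u.length),
            List.take_of_length_le (Nat.le_add_right u.length 2),
            List.drop_length, List.drop_eq_nil_of_le (Nat.le_succ u.length),
            List.take_succ_cons, List.take_zero, List.drop_zero,
            List.drop_succ_cons, List.nil_append,
            List.map_append, List.sum_append, List.map_cons, List.sum_cons,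
            List.map_nil, List.sum_nil]
          linarith
end

section
/- Sorting by Johnson's rule minimizes the makespan of the two-machine permutation flow shop: a permutation π in which min(a_{π(i)}, b_{π(j)}) ≤ min(a_{π(j)}, b_{π(i)}) holds for all i < j achieves the minimum of max_{1 ≤ k ≤ n}(∑_{i=1}^k a_{π(i)} + ∑_{i=k}^n b_{π(i)}) over all permutations. -/
section J
variable {ι : Type*} (a b : ι → ℝ)

private lemma fold_max_eq {α : Type*} [DecidableEq α] (s : Finset α) (hs : s.Nonempty) (f : α → ℝ) :
    s.fold max 0 f = max 0 (s.sup' hs f) := by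
  induction s using Finset.cons_induction with
  | empty => simp at hs
  | cons c s hc ih =>
    rcases s.eq_empty_or_nonempty with rfl | hs'
    · simp [max_comm]
    · rw [Finset.fold_cons, Finset.sup'_cons hs', ih hs']
      exact max_left_comm _ _ _

private lemma sup'_nonneg_of_mem {α : Type*} {s : Finset α} {hs : s.Nonempty} {f : α → ℝ}
    {x : α} (hx : x ∈ s) (h : 0 ≤ f x) : 0 ≤ s.sup' hs f :=
  le_trans h (Finset.le_sup' f hx)

lemma flowMakespan_nil : flowMakespan a b ([] : List ι) = 0 := by simp [flowMakespan]

lemma flowMakespan_cons (ha : ∀ j, 0 ≤ a j) (hb : ∀ j, 0 ≤ b j) (x : ι) (m : List ι) :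
    flowMakespan a b (x :: m) = a x + max (b x + (m.map b).sum) (flowMakespan a b m) := by
  classical
  cases m with
  | nil =>
      simp only [flowMakespan, List.length_cons, List.length_nil, Nat.zero_add,
        Finset.Icc_self, Finset.fold_singleton, List.take_succ_cons, List.take_nil,
        List.drop, List.map_cons, List.map_nil, List.sum_cons, List.sum_nil,
        Finset.Icc_eq_empty_of_lt (by norm_num : (1:ℕ) > 0), Finset.fold_empty,
        add_zero, Nat.sub_self, List.drop_zero]
      rw [max_eq_left (add_nonneg (ha x) (hb x)), max_eq_left (hb x)]
  | cons y m' =>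
      set m := y :: m' with hm
      have hml : 1 ≤ m.length := by simp [hm]
      -- index set decomposition
      have hset : Finset.Icc 1 (m.length + 1)
          = insert 1 ((Finset.Icc 1 m.length).image (· + 1)) := by
        ext k
        simp only [Finset.mem_Icc, Finset.mem_insert, Finset.mem_image]
        constructor
        · rintro ⟨h1, h2⟩
          rcases Nat.eq_or_lt_of_le h1 with h | h
          · exact Or.inl h.symm
          · exact Or.inr ⟨k - 1, ⟨by omega, by omega⟩, by omega⟩
        · rintro (rfl | ⟨j, ⟨hj1, hj2⟩, rfl⟩) <;> omega
      have hne : (Finset.Icc 1 m.length).Nonempty := by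
        rw [Finset.nonempty_Icc]; omega
      have hnotmem : (1 : ℕ) ∉ (Finset.Icc 1 m.length).image (· + 1) := by
        simp only [Finset.mem_image, Finset.mem_Icc, not_exists]; omega
      have hne2 : ((Finset.Icc 1 m.length).image (· + 1)).Nonempty := hne.image _
      -- the term function for x :: m
      set f : ℕ → ℝ := fun k =>
        (((x :: m).take k).map a).sum + (((x :: m).drop (k - 1)).map b).sum with hf
      set g : ℕ → ℝ := fun k => ((m.take k).map a).sum + ((m.drop (k - 1)).map b).sum with hg
      have hcomp : ∀ k ∈ Finset.Icc 1 m.length, (f ∘ (· + 1)) k = a x + g k := by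
        intro k hk
        simp only [Finset.mem_Icc] at hk
        obtain ⟨j, rfl⟩ : ∃ j, k = j + 1 := ⟨k - 1, by omega⟩
        simp only [Function.comp, hf, hg, ← add_assoc, Nat.add_sub_cancel,
          List.take_succ_cons, List.drop_succ_cons, List.map_cons, List.sum_cons]
      have hflow : flowMakespan a b (x :: m)
          = max 0 (max (f 1) ((Finset.Icc 1 m.length).sup' hne (fun k => a x + g k))) := by
        rw [flowMakespan]
        simp only [List.length_cons]
        rw [hset, fold_max_eq _ (Finset.insert_nonempty _ _),
          Finset.sup'_insert (H := hne2), Finset.sup'_image,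
          Finset.sup'_congr _ rfl hcomp]
      have hf1 : f 1 = a x + (b x + (m.map b).sum) := by
        simp [hf, hm]
      have hgn : 0 ≤ (Finset.Icc 1 m.length).sup' hne g := by
        refine sup'_nonneg_of_mem (f := g) (x := 1) (by simp only [Finset.mem_Icc]; omega) ?_
        simp only [hg]
        refine add_nonneg (List.sum_nonneg ?_) (List.sum_nonneg ?_) <;>
          · intro z hz
            obtain ⟨u, hu, rfl⟩ := List.mem_map.1 hz
            first | exact ha u | exact hb u
      have hMm : flowMakespan a b m = (Finset.Icc 1 m.length).sup' hne g := by
        rw [flowMakespan, fold_max_eq _ hne, max_eq_right hgn]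
      have hsb : 0 ≤ (m.map b).sum := List.sum_nonneg (by
        intro z hz; obtain ⟨u, hu, rfl⟩ := List.mem_map.1 hz; exact hb u)
      rw [hflow, hf1, hMm,
        max_eq_right (le_max_of_le_left
          (add_nonneg (ha x) (add_nonneg (hb x) hsb) :
            (0:ℝ) ≤ a x + (b x + (m.map b).sum))),
        ← Finset.add_sup' _ g (a x) hne, max_add_add_left]
end J

section J2
variable {ι : Type*} (a b : ι → ℝ)

private lemma cons_mono (ha : ∀ j, 0 ≤ a j) (hb : ∀ j, 0 ≤ b j) (x : ι) {m₁ m₂ : List ι}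
    (hp : m₁.Perm m₂) (h : flowMakespan a b m₁ ≤ flowMakespan a b m₂) :
    flowMakespan a b (x :: m₁) ≤ flowMakespan a b (x :: m₂) := by
  rw [flowMakespan_cons a b ha hb, flowMakespan_cons a b ha hb]
  have hs : (m₁.map b).sum = (m₂.map b).sum := (hp.map b).sum_eq
  exact add_le_add (le_refl _) (max_le_max (le_of_eq (by rw [hs])) h)

private lemma swap_le (ha : ∀ j, 0 ≤ a j) (hb : ∀ j, 0 ≤ b j) {u v : ι}
    (hr : min (a u) (b v) ≤ min (a v) (b u)) (q : List ι) :
    flowMakespan a b (u :: v :: q) ≤ flowMakespan a b (v :: u :: q) := by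
  rw [flowMakespan_cons a b ha hb, flowMakespan_cons a b ha hb,
    flowMakespan_cons a b ha hb, flowMakespan_cons a b ha hb]
  simp only [List.map_cons, List.sum_cons]
  have h1 : min (a u) (b v) ≤ a v := hr.trans (min_le_left _ _)
  have h2 : min (a u) (b v) ≤ b u := hr.trans (min_le_right _ _)
  rcases min_cases (a u) (b v) with ⟨he, _⟩ | ⟨he, _⟩ <;> rw [he] at h1 h2 <;>
    · simp only [max_def]
      split_ifs <;> linarith

private lemma bubble_le (ha : ∀ j, 0 ≤ a j) (hb : ∀ j, 0 ≤ b j) {x : ι} (p q : List ι)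
    (hx : ∀ y ∈ p, min (a x) (b y) ≤ min (a y) (b x)) :
    flowMakespan a b (x :: (p ++ q)) ≤ flowMakespan a b (p ++ x :: q) := by
  induction p with
  | nil => exact le_refl _
  | cons y p ih =>
      have h1 : flowMakespan a b (x :: y :: (p ++ q)) ≤ flowMakespan a b (y :: x :: (p ++ q)) :=
        swap_le a b ha hb (hx y List.mem_cons_self) _
      have h2 : flowMakespan a b (y :: x :: (p ++ q)) ≤ flowMakespan a b (y :: (p ++ x :: q)) :=
        cons_mono a b ha hb y List.perm_middle.symm
          (ih (fun z hz => hx z (List.mem_cons_of_mem y hz)))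
      exact h1.trans h2

end J2

/-- Sorting by Johnson's rule minimizes the two-machine permutation flow shop makespan:
if `l₁` is ordered so that `min(a_u, b_v) ≤ min(a_v, b_u)` whenever `u` appears before
`v`, then its makespan is at most that of any permutation `l₂` of the same jobs. -/
theorem johnson_rule_optimal {ι : Type*} (a b : ι → ℝ)
    (ha : ∀ j, 0 ≤ a j) (hb : ∀ j, 0 ≤ b j)
    (l₁ l₂ : List ι) (hperm : l₁.Perm l₂)
    (hsorted : l₁.Pairwise (fun u v => min (a u) (b v) ≤ min (a v) (b u))) :
    flowMakespan a b l₁ ≤ flowMakespan a b l₂ := by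
  induction l₁ generalizing l₂ with
  | nil => rw [← hperm.symm.eq_nil]
  | cons x t ih =>
      obtain ⟨hx, hs⟩ := List.pairwise_cons.1 hsorted
      have hmem : x ∈ l₂ := hperm.mem_iff.1 List.mem_cons_self
      obtain ⟨p, q, rfl⟩ := List.append_of_mem hmem
      have hperm' : t.Perm (p ++ q) :=
        (hperm.trans List.perm_middle).cons_inv
      calc flowMakespan a b (x :: t)
          ≤ flowMakespan a b (x :: (p ++ q)) :=
            cons_mono a b ha hb x hperm' (ih (p ++ q) hperm' hs)
        _ ≤ flowMakespan a b (p ++ x :: q) :=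
            bubble_le a b ha hb p q
              (fun y hy => hx y (hperm'.symm.subset (List.mem_append_left q hy)))
end
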